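/- Assume the associated normalized rank-2 bundle is unstable, i.e. N_{m−1} ≠ 0 if a−b is even, respectively N_m ≠ 0 if a−b is odd, and let k = max{ j ∈ ℤ : N_{m−j} ≠ 0 }. Then every nonzero element s = (s_1, …, s_{n+2}) ∈ N_{m−k} is a regular section: the homogeneous polynomials s_1, …, s_{n+2} have no common nonconstant factor, equivalently their common zero locus in P^2 is finite (of codimension at least 2). -/

import Mathlib

open MvPolynomial

noncomputable section

variable {K : Type*} [Field K]

/-- `p` is homogeneous of (integer) degree `d`; for `d < 0` this forces `p = 0`. -/
def homog (p : MvPolynomial (Fin 3) K) (d : ℤ) : Prop :=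
  IsWeightedHomogeneous (fun _ : Fin 3 => (1 : ℤ)) p d

/-- The degree-`d` graded piece of `⊕_{i=1}^{N} R(-a i)`, as a `K`-subspace of
`Fin N → R`, `R = K[x,y,z]`. -/
def degPiece (N : ℕ) (a : Fin N → ℤ) (d : ℤ) :
    Submodule K (Fin N → MvPolynomial (Fin 3) K) :=
  Submodule.pi Set.univ fun i =>
    weightedHomogeneousSubmodule K (fun _ : Fin 3 => (1 : ℤ)) (d - a i)

lemma mem_degPiece {N : ℕ} {a : Fin N → ℤ} {d : ℤ} {v : Fin N → MvPolynomial (Fin 3) K} :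
    v ∈ degPiece (K := K) N a d ↔ ∀ i, homog (v i) (d - a i) := by
  simp [degPiece, Submodule.mem_pi, mem_weightedHomogeneousSubmodule, homog]

/-- The map `φ : ⊕ R(-a i) → ⊕ R(-b j)` given by the matrix `Φ`, as a `K`-linear map. -/
def phiK (n : ℕ) (Φ : Matrix (Fin n) (Fin (n + 2)) (MvPolynomial (Fin 3) K)) :
    (Fin (n + 2) → MvPolynomial (Fin 3) K) →ₗ[K] (Fin n → MvPolynomial (Fin 3) K) :=
  (Matrix.mulVecLin Φ).restrictScalars K

/-- The degree-`d` graded piece of `N = ker φ`. -/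
def Nd (n : ℕ) (a : Fin (n + 2) → ℤ) (Φ : Matrix (Fin n) (Fin (n + 2)) (MvPolynomial (Fin 3) K))
    (d : ℤ) : Submodule K (Fin (n + 2) → MvPolynomial (Fin 3) K) :=
  degPiece (n + 2) a d ⊓ LinearMap.ker (phiK n Φ)

/-- The image of the degree-`d` piece of `F` inside the degree-`d` piece of `G`,
viewed as a subspace of the latter. -/
def MdSub (n : ℕ) (a : Fin (n + 2) → ℤ) (b : Fin n → ℤ)
    (Φ : Matrix (Fin n) (Fin (n + 2)) (MvPolynomial (Fin 3) K)) (d : ℤ) :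
    Submodule K ↥(degPiece (K := K) n b d) :=
  Submodule.comap (degPiece (K := K) n b d).subtype
    (Submodule.map (phiK n Φ) (degPiece (n + 2) a d))

/-- The degree-`d` graded piece of `M = coker φ`. -/
abbrev Md (n : ℕ) (a : Fin (n + 2) → ℤ) (b : Fin n → ℤ)
    (Φ : Matrix (Fin n) (Fin (n + 2)) (MvPolynomial (Fin 3) K)) (d : ℤ) :=
  ↥(degPiece (K := K) n b d) ⧸ MdSub n a b Φ d

/-- Multiplication by `L` on tuples of polynomials, as a `K`-linear map. -/
def mulL (N : ℕ) (L : MvPolynomial (Fin 3) K) :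
    (Fin N → MvPolynomial (Fin 3) K) →ₗ[K] (Fin N → MvPolynomial (Fin 3) K) :=
  ((LinearMap.lsmul (MvPolynomial (Fin 3) K) (Fin N → MvPolynomial (Fin 3) K)) L).restrictScalars K

lemma mulL_apply {N : ℕ} (L : MvPolynomial (Fin 3) K) (v : Fin N → MvPolynomial (Fin 3) K) :
    mulL N L v = L • v := rfl

lemma mulL_mem {N : ℕ} {a : Fin N → ℤ} {L : MvPolynomial (Fin 3) K} (hL : homog L 1)
    {d : ℤ} {v : Fin N → MvPolynomial (Fin 3) K} (hv : v ∈ degPiece (K := K) N a (d - 1)) :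
    mulL N L v ∈ degPiece (K := K) N a d := by
  rw [mem_degPiece] at hv ⊢
  intro i
  have h := hL.mul (hv i)
  have e : (1 : ℤ) + (d - 1 - a i) = d - a i := by ring
  rw [e] at h
  simpa [mulL_apply, smul_eq_mul, homog] using h

/-- Multiplication by `L` from the degree-`d-1` piece of `G` to the degree-`d` piece. -/
def mulLres (n : ℕ) (b : Fin n → ℤ) (L : MvPolynomial (Fin 3) K) (hL : homog L 1) (d : ℤ) :
    ↥(degPiece (K := K) n b (d - 1)) →ₗ[K] ↥(degPiece (K := K) n b d) :=
  (mulL n L).restrict fun _ hv => mulL_mem hL hv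

lemma mulLres_comap (n : ℕ) (a : Fin (n + 2) → ℤ) (b : Fin n → ℤ)
    (Φ : Matrix (Fin n) (Fin (n + 2)) (MvPolynomial (Fin 3) K))
    (L : MvPolynomial (Fin 3) K) (hL : homog L 1) (d : ℤ) :
    MdSub n a b Φ (d - 1) ≤ Submodule.comap (mulLres n b L hL d) (MdSub n a b Φ d) := by
  rintro ⟨w, hw⟩ hmem
  obtain ⟨v, hv, hφv⟩ := hmem
  refine ⟨mulL (n + 2) L v, mulL_mem hL hv, ?_⟩
  show phiK n Φ (mulL (n + 2) L v) = ((mulLres n b L hL d) ⟨w, hw⟩ : Fin n → MvPolynomial (Fin 3) K)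
  have : phiK n Φ (mulL (n + 2) L v) = L • phiK n Φ v := by
    simp [phiK, mulL_apply]
  rw [this, hφv]
  rfl

/-- The map induced by multiplication by `L` from `M_{d-1}` to `M_d`,
where `M = coker φ`. -/
def mulLmap (n : ℕ) (a : Fin (n + 2) → ℤ) (b : Fin n → ℤ)
    (Φ : Matrix (Fin n) (Fin (n + 2)) (MvPolynomial (Fin 3) K))
    (L : MvPolynomial (Fin 3) K) (hL : homog L 1) (d : ℤ) :
    Md n a b Φ (d - 1) →ₗ[K] Md n a b Φ d :=
  Submodule.mapQ (MdSub n a b Φ (d - 1)) (MdSub n a b Φ d) (mulLres n b L hL d)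
    (mulLres_comap n a b Φ L hL d)

/-- The linear form with coefficient vector `c`. -/
def linform (c : Fin 3 → K) : MvPolynomial (Fin 3) K := ∑ i, C (c i) * X i

lemma homog_linform (c : Fin 3 → K) : homog (linform c) 1 := by
  rw [homog, ← mem_weightedHomogeneousSubmodule]
  refine sum_mem fun i _ => ?_
  rw [mem_weightedHomogeneousSubmodule]
  simpa using (isWeightedHomogeneous_C (fun _ : Fin 3 => (1 : ℤ)) (c i)).mul
    (isWeightedHomogeneous_X K (fun _ : Fin 3 => (1 : ℤ)) i)

/-- Finite length of `coker φ`: all sufficiently high graded pieces vanish. -/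
def FiniteColength (n : ℕ) (a : Fin (n + 2) → ℤ) (b : Fin n → ℤ)
    (Φ : Matrix (Fin n) (Fin (n + 2)) (MvPolynomial (Fin 3) K)) : Prop :=
  ∃ D : ℤ, ∀ d : ℤ, D ≤ d →
    degPiece (K := K) n b d ≤ Submodule.map (phiK n Φ) (degPiece (n + 2) a d)

end


section Aux

namespace Stmt10Aux

open MvPolynomial

variable {σ R : Type*} [CommRing R] [IsDomain R]

lemma degree_add (u v : σ →₀ ℕ) : (u + v).degree = u.degree + v.degree := by
  rw [show (Finsupp.degree : (σ →₀ ℕ) → ℕ) = Finsupp.weight 1 from congrArg DFunLike.coe Finsupp.degree_eq_weight_one]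
  exact map_add _ u v

/-- top degree of the support -/
noncomputable def tdeg (p : MvPolynomial σ R) : ℕ := p.support.sup Finsupp.degree

open Classical in
/-- bottom degree of the support -/
noncomputable def bdeg (p : MvPolynomial σ R) : ℕ :=
  if h : p = 0 then 0 else p.support.inf' (support_nonempty.mpr h) Finsupp.degree

lemma le_tdeg {p : MvPolynomial σ R} {d : σ →₀ ℕ} (hd : d ∈ p.support) :
    d.degree ≤ tdeg p := Finset.le_sup hd

lemma bdeg_le {p : MvPolynomial σ R} (hp : p ≠ 0) {d : σ →₀ ℕ} (hd : d ∈ p.support) :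
    bdeg p ≤ d.degree := by
  rw [bdeg]
  rw [dif_neg hp]
  exact Finset.inf'_le _ hd

lemma exists_tdeg {p : MvPolynomial σ R} (hp : p ≠ 0) :
    ∃ d ∈ p.support, d.degree = tdeg p := by
  obtain ⟨d, hd, hdeg⟩ := Finset.exists_mem_eq_sup _ (support_nonempty.mpr hp) Finsupp.degree
  exact ⟨d, hd, hdeg.symm⟩

lemma exists_bdeg {p : MvPolynomial σ R} (hp : p ≠ 0) :
    ∃ d ∈ p.support, d.degree = bdeg p := by
  obtain ⟨d, hd, hdeg⟩ := Finset.exists_mem_eq_inf' (support_nonempty.mpr hp)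
    (Finsupp.degree (σ := σ))
  refine ⟨d, hd, ?_⟩
  rw [bdeg]
  rw [dif_neg hp, hdeg]

lemma bdeg_le_tdeg {p : MvPolynomial σ R} (hp : p ≠ 0) : bdeg p ≤ tdeg p := by
  obtain ⟨d, hd, hdeg⟩ := exists_tdeg hp
  exact hdeg ▸ bdeg_le hp hd

lemma comp_tdeg_ne_zero {p : MvPolynomial σ R} (hp : p ≠ 0) :
    homogeneousComponent (tdeg p) p ≠ 0 := by
  obtain ⟨d, hd, hdeg⟩ := exists_tdeg hp
  intro h
  have := coeff_homogeneousComponent (tdeg p) p d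
  rw [h, if_pos hdeg] at this
  exact (mem_support_iff.mp hd) this.symm

lemma comp_bdeg_ne_zero {p : MvPolynomial σ R} (hp : p ≠ 0) :
    homogeneousComponent (bdeg p) p ≠ 0 := by
  obtain ⟨d, hd, hdeg⟩ := exists_bdeg hp
  intro h
  have := coeff_homogeneousComponent (bdeg p) p d
  rw [h, if_pos hdeg] at this
  exact (mem_support_iff.mp hd) this.symm

lemma comp_mul_top (p q : MvPolynomial σ R) :
    homogeneousComponent (tdeg p + tdeg q) (p * q) =
      homogeneousComponent (tdeg p) p * homogeneousComponent (tdeg q) q := by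
  classical
  apply MvPolynomial.ext
  intro d
  rw [coeff_homogeneousComponent, coeff_mul, coeff_mul]
  by_cases h : d.degree = tdeg p + tdeg q
  · rw [if_pos h]
    apply Finset.sum_congr rfl
    intro x hx
    rw [Finset.HasAntidiagonal.mem_antidiagonal] at hx
    have hxd : x.1.degree + x.2.degree = tdeg p + tdeg q := by
      rw [← degree_add, hx, h]
    rw [coeff_homogeneousComponent, coeff_homogeneousComponent]
    by_cases h1 : x.1.degree = tdeg p
    · have h2 : x.2.degree = tdeg q := by omega
      rw [if_pos h1, if_pos h2]
    · rw [if_neg h1, zero_mul]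
      by_cases c1 : coeff x.1 p = 0
      · rw [c1, zero_mul]
      · have hle : x.1.degree ≤ tdeg p := le_tdeg (mem_support_iff.mpr c1)
        have hc2 : coeff x.2 q = 0 := by
          by_contra c2
          have := le_tdeg (mem_support_iff.mpr c2)
          omega
        rw [hc2, mul_zero]
  · rw [if_neg h]
    symm
    apply Finset.sum_eq_zero
    intro x hx
    rw [Finset.HasAntidiagonal.mem_antidiagonal] at hx
    rw [coeff_homogeneousComponent, coeff_homogeneousComponent]
    by_cases h1 : x.1.degree = tdeg p
    · by_cases h2 : x.2.degree = tdeg q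
      · exact absurd (by rw [← hx, degree_add, h1, h2]) h
      · rw [if_neg h2, mul_zero]
    · rw [if_neg h1, zero_mul]

lemma comp_mul_bot {p q : MvPolynomial σ R} (hp : p ≠ 0) (hq : q ≠ 0) :
    homogeneousComponent (bdeg p + bdeg q) (p * q) =
      homogeneousComponent (bdeg p) p * homogeneousComponent (bdeg q) q := by
  classical
  apply MvPolynomial.ext
  intro d
  rw [coeff_homogeneousComponent, coeff_mul, coeff_mul]
  by_cases h : d.degree = bdeg p + bdeg q
  · rw [if_pos h]
    apply Finset.sum_congr rfl
    intro x hx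
    rw [Finset.HasAntidiagonal.mem_antidiagonal] at hx
    have hxd : x.1.degree + x.2.degree = bdeg p + bdeg q := by
      rw [← degree_add, hx, h]
    rw [coeff_homogeneousComponent, coeff_homogeneousComponent]
    by_cases h1 : x.1.degree = bdeg p
    · have h2 : x.2.degree = bdeg q := by omega
      rw [if_pos h1, if_pos h2]
    · rw [if_neg h1, zero_mul]
      by_cases c1 : coeff x.1 p = 0
      · rw [c1, zero_mul]
      · have hle : bdeg p ≤ x.1.degree := bdeg_le hp (mem_support_iff.mpr c1)
        have hc2 : coeff x.2 q = 0 := by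
          by_contra c2
          have := bdeg_le hq (mem_support_iff.mpr c2)
          omega
        rw [hc2, mul_zero]
  · rw [if_neg h]
    symm
    apply Finset.sum_eq_zero
    intro x hx
    rw [Finset.HasAntidiagonal.mem_antidiagonal] at hx
    rw [coeff_homogeneousComponent, coeff_homogeneousComponent]
    by_cases h1 : x.1.degree = bdeg p
    · by_cases h2 : x.2.degree = bdeg q
      · exact absurd (by rw [← hx, degree_add, h1, h2]) h
      · rw [if_neg h2, mul_zero]
    · rw [if_neg h1, zero_mul]

lemma isHomogeneous_of_deg {p : MvPolynomial σ R} {n : ℕ}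
    (h : ∀ d ∈ p.support, Finsupp.degree d = n) : p.IsHomogeneous n := by
  intro d hd
  rw [show (Finsupp.weight 1 : (σ →₀ ℕ) → ℕ) = Finsupp.degree from
    (congrArg DFunLike.coe Finsupp.degree_eq_weight_one).symm]
  exact h d (mem_support_iff.mpr hd)

lemma deg_of_isHomogeneous {p : MvPolynomial σ R} {n : ℕ} (h : p.IsHomogeneous n)
    {d : σ →₀ ℕ} (hd : d ∈ p.support) : Finsupp.degree d = n := by
  rw [show (Finsupp.degree : (σ →₀ ℕ) → ℕ) = Finsupp.weight 1 from congrArg DFunLike.coe Finsupp.degree_eq_weight_one]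
  exact h (mem_support_iff.mp hd)

/-- Factors of a nonzero homogeneous polynomial over a domain are homogeneous. -/
theorem factors_homogeneous {q r : MvPolynomial σ R} {D : ℕ}
    (h : (q * r).IsHomogeneous D) (hq : q ≠ 0) (hr : r ≠ 0) :
    q.IsHomogeneous (tdeg q) ∧ r.IsHomogeneous (tdeg r) ∧ tdeg q + tdeg r = D := by
  have hmem : q * r ∈ homogeneousSubmodule σ R D := (mem_homogeneousSubmodule _ _).mpr h
  have htop : tdeg q + tdeg r = D := by
    have hne := mul_ne_zero (comp_tdeg_ne_zero hq) (comp_tdeg_ne_zero hr)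
    rw [← comp_mul_top] at hne
    by_contra hDD
    rw [homogeneousComponent_of_mem hmem, if_neg hDD] at hne
    exact hne rfl
  have hbot : bdeg q + bdeg r = D := by
    have hne := mul_ne_zero (comp_bdeg_ne_zero hq) (comp_bdeg_ne_zero hr)
    rw [← comp_mul_bot hq hr] at hne
    by_contra hDD
    rw [homogeneousComponent_of_mem hmem, if_neg hDD] at hne
    exact hne rfl
  have h1 := bdeg_le_tdeg hq
  have h2 := bdeg_le_tdeg hr
  have hq' : bdeg q = tdeg q := by omega
  have hr' : bdeg r = tdeg r := by omega
  refine ⟨isHomogeneous_of_deg fun d hd => ?_, isHomogeneous_of_deg fun d hd => ?_, htop⟩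
  · exact le_antisymm (le_tdeg hd) (hq' ▸ bdeg_le hq hd)
  · exact le_antisymm (le_tdeg hd) (hr' ▸ bdeg_le hr hd)

lemma weight_one_int (d : σ →₀ ℕ) :
    Finsupp.weight (fun _ : σ => (1 : ℤ)) d = (d.degree : ℤ) := by
  rw [Finsupp.weight_apply, Finsupp.degree]
  rw [Finsupp.sum]
  push_cast
  simp [Finsupp.degree]
  exact (Nat.cast_sum _ _).symm

end Stmt10Aux

section Bridge

open MvPolynomial Stmt10Aux

variable {K : Type*} [Field K]

lemma homog_to_nat {p : MvPolynomial (Fin 3) K} {d : ℤ} (hp : p ≠ 0) (h : homog p d) :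
    0 ≤ d ∧ p.IsHomogeneous d.toNat := by
  have key : ∀ dm ∈ p.support, ((Finsupp.degree dm : ℕ) : ℤ) = d := by
    intro dm hdm
    have := h (mem_support_iff.mp hdm)
    rwa [weight_one_int] at this
  obtain ⟨dm, hdm⟩ := support_nonempty.mpr hp
  have h0 := key dm hdm
  have hd0 : 0 ≤ d := by omega
  refine ⟨hd0, isHomogeneous_of_deg fun dm' hdm' => ?_⟩
  have := key dm' hdm'
  omega

lemma nat_to_homog {p : MvPolynomial (Fin 3) K} {e : ℕ} (h : p.IsHomogeneous e) :
    homog p (e : ℤ) := by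
  intro d hd
  rw [weight_one_int]
  have := deg_of_isHomogeneous h (mem_support_iff.mpr hd)
  exact_mod_cast this

end Bridge

/-- Suppose the associated normalized rank-2 bundle is unstable, i.e.
`N_{m-1} ≠ 0` if `a - b = 2m` is even, resp. `N_m ≠ 0` if `a - b = 2m + 1` is odd, and let
`k = max{ j : N_{m-j} ≠ 0 }`. Then every nonzero element `s = (s_1, …, s_{n+2}) ∈ N_{m-k}` is
a regular section: the polynomials `s_i` have no common nonconstant factor. -/
theorem statement10 {K : Type*} [Field K] [IsAlgClosed K] [CharZero K]
    (n : ℕ) (a : Fin (n + 2) → ℤ) (b : Fin n → ℤ)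
    (Φ : Matrix (Fin n) (Fin (n + 2)) (MvPolynomial (Fin 3) K))
    (hΦ : ∀ j i, homog (Φ j i) (a i - b j))
    (hfin : FiniteColength n a b Φ)
    (m : ℤ)
    (hunstable : ((∑ i, a i) - (∑ j, b j) = 2 * m ∧ Nd n a Φ (m - 1) ≠ ⊥) ∨
      ((∑ i, a i) - (∑ j, b j) = 2 * m + 1 ∧ Nd n a Φ m ≠ ⊥))
    (k : ℤ) (hk₁ : Nd n a Φ (m - k) ≠ ⊥) (hk₂ : ∀ j : ℤ, Nd n a Φ (m - j) ≠ ⊥ → j ≤ k) :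
    ∀ s : Fin (n + 2) → MvPolynomial (Fin 3) K, s ∈ Nd n a Φ (m - k) → s ≠ 0 →
      ∀ q : MvPolynomial (Fin 3) K, (∀ i, q ∣ s i) → IsUnit q := by
  classical
  intro s hs hs0 q hdvd
  by_contra hqu
  obtain ⟨hsdeg, hsker⟩ := Submodule.mem_inf.mp hs
  have hsdeg' := mem_degPiece.mp hsdeg
  obtain ⟨i0, hi0⟩ : ∃ i, s i ≠ 0 := Function.ne_iff.mp hs0
  have hq0 : q ≠ 0 := by
    rintro rfl
    exact hi0 (zero_dvd_iff.mp (hdvd i0))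
  choose t ht using hdvd
  have hti0 : t i0 ≠ 0 := by
    rintro h0
    rw [ht i0, h0, mul_zero] at hi0
    exact hi0 rfl
  -- q is homogeneous of degree e := tdeg q
  set e := Stmt10Aux.tdeg q with he
  obtain ⟨hD0, hN0⟩ := homog_to_nat hi0 (hsdeg' i0)
  rw [ht i0] at hN0
  obtain ⟨hqh, -, -⟩ := Stmt10Aux.factors_homogeneous hN0 hq0 hti0
  -- e ≥ 1, since q is not a unit
  have he1 : 1 ≤ e := by
    by_contra h1
    have he0 : e = 0 := by omega
    have hqC : q = C (coeff 0 q) := by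
      apply MvPolynomial.ext
      intro d
      by_cases hd : d = 0
      · subst hd; simp
      · rw [coeff_C, if_neg (Ne.symm hd)]
        by_contra hc
        have := Stmt10Aux.deg_of_isHomogeneous hqh (mem_support_iff.mpr hc)
        rw [← he, he0, Finsupp.degree_eq_zero_iff] at this
        exact hd this
    have hc0 : coeff 0 q ≠ 0 := by
      intro h0
      rw [h0, map_zero] at hqC
      exact hq0 hqC
    exact hqu (hqC ▸ (isUnit_iff_ne_zero.mpr hc0).map (C : K →+* MvPolynomial (Fin 3) K))
  -- t is homogeneous of the right degrees
  have hthom : ∀ i, homog (t i) ((m - (k + e)) - a i) := by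
    intro i
    by_cases h0 : t i = 0
    · rw [h0]
      intro d hd
      simp at hd
    · have hsi0 : s i ≠ 0 := by
        rw [ht i]
        exact mul_ne_zero hq0 h0
      obtain ⟨hDi, hNi⟩ := homog_to_nat hsi0 (hsdeg' i)
      rw [ht i] at hNi
      obtain ⟨-, hth, hsum⟩ := Stmt10Aux.factors_homogeneous hNi hq0 h0
      have := nat_to_homog hth
      have hdeq : ((Stmt10Aux.tdeg (t i) : ℤ)) = (m - (k + e)) - a i := by
        have h1 : (e : ℤ) + (Stmt10Aux.tdeg (t i) : ℤ) = ((m - k - a i).toNat : ℤ) := by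
          exact_mod_cast congrArg (Nat.cast : ℕ → ℤ) hsum
        omega
      rwa [hdeq] at this
  -- t lies in the kernel of φ
  have htker : phiK n Φ t = 0 := by
    have hst : s = q • t := funext fun i => ht i
    have hphi : phiK n Φ s = q • phiK n Φ t := by
      rw [hst]
      exact map_smul (Matrix.mulVecLin Φ) q t
    rw [LinearMap.mem_ker] at hsker
    rw [hsker] at hphi
    funext j
    have := congrFun hphi.symm j
    rw [Pi.smul_apply, smul_eq_mul] at this
    rcases mul_eq_zero.mp this with h | h
    · exact absurd h hq0
    · exact h
  have htmem : t ∈ Nd n a Φ (m - (k + e)) :=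
    Submodule.mem_inf.mpr ⟨mem_degPiece.mpr hthom, LinearMap.mem_ker.mpr htker⟩
  have hne : Nd n a Φ (m - (k + e)) ≠ ⊥ := by
    intro hbot
    rw [hbot, Submodule.mem_bot] at htmem
    exact hti0 (congrFun htmem i0)
  have := hk₂ (k + e) hne
  omega
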